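/- For every positive integer ℓ, the probability r(ℓ) that a uniformly random permutation of an ℓ-set is regular satisfies 1/ℓ ≤ r(ℓ) ≤ 1/ℓ + 2/ℓ² + c/ℓ³, where c = e³/(1 - e/3). Moreover r(ℓ) = Σ_{m | ℓ} m^m/(ℓ^m · m!). -/

import Mathlib

open Equiv Function Finset

section RegularAux

variable {α : Type*} [Fintype α] [DecidableEq α]

/-- minimal period of a point under a permutation equals the card of its cycle's support -/
lemma mp_eq_card_support_cycleOf (σ : Perm α) (x : α) (hx : σ x ≠ x) :
    minimalPeriod (⇑σ) x = (σ.cycleOf x).support.card := by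
  have hc : (σ.cycleOf x).IsCycle := σ.isCycle_cycleOf hx
  have hxc : x ∈ (σ.cycleOf x).support := by
    rw [Equiv.Perm.mem_support_cycleOf_iff]
    exact ⟨Equiv.Perm.SameCycle.refl _ _, Equiv.Perm.mem_support.2 hx⟩
  have key : ∀ n : ℕ, IsPeriodicPt (⇑σ) n x ↔ orderOf (σ.cycleOf x) ∣ n := by
    intro n
    rw [IsPeriodicPt, IsFixedPt, Equiv.Perm.iterate_eq_pow, ← σ.cycleOf_pow_apply_self,
      orderOf_dvd_iff_pow_eq_one]
    constructor
    · intro h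
      exact (hc.pow_eq_one_iff' (Equiv.Perm.mem_support.1 hxc)).2 h
    · intro h
      rw [h]; rfl
  have h1 : minimalPeriod (⇑σ) x ∣ orderOf (σ.cycleOf x) :=
    IsPeriodicPt.minimalPeriod_dvd ((key _).2 dvd_rfl)
  have h2 : orderOf (σ.cycleOf x) ∣ minimalPeriod (⇑σ) x := by
    refine (key _).1 ?_
    exact isPeriodicPt_minimalPeriod _ _
  rw [Nat.dvd_antisymm h1 h2, hc.orderOf]

lemma regular_cycleType {σ : Perm α} {d : ℕ} (hd : 2 ≤ d)
    (h : ∀ x, minimalPeriod (⇑σ) x = d) :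
    σ.cycleType = Multiset.replicate (Fintype.card α / d) d ∧ d ∣ Fintype.card α := by
  have hsupp : σ.support = Finset.univ := by
    ext x; simp only [Finset.mem_univ, iff_true, Equiv.Perm.mem_support]
    intro hfix
    have : minimalPeriod (⇑σ) x = 1 := by
      rw [minimalPeriod_eq_one_iff_isFixedPt]; exact hfix
    have := h x
    omega
  have hall : ∀ c ∈ σ.cycleType, c = d := by
    intro c hc
    rw [Equiv.Perm.cycleType_def, Multiset.mem_map] at hc
    obtain ⟨f, hf, rfl⟩ := hc
    have hf' := Equiv.Perm.mem_cycleFactorsFinset_iff.1 hf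
    obtain ⟨x, hx, -⟩ := hf'.1
    have hxs : x ∈ f.support := by
      rw [Equiv.Perm.mem_support]; exact hx
    have hcx : f = σ.cycleOf x := Equiv.Perm.cycle_is_cycleOf hxs hf
    have hσx : σ x ≠ x := by
      have := hf'.2 x hxs; rw [Equiv.Perm.mem_support] at hxs; rwa [this] at hxs
    show f.support.card = d
    rw [hcx]
    rw [← mp_eq_card_support_cycleOf σ x hσx, h x]
  have hsum : σ.cycleType.sum = Fintype.card α := by
    rw [Equiv.Perm.sum_cycleType, hsupp, Finset.card_univ]
  have hsum2 : σ.cycleType.sum = Multiset.card σ.cycleType * d := by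
    rw [Multiset.eq_replicate_of_mem hall, Multiset.sum_replicate, smul_eq_mul,
      Multiset.card_replicate]
  have hmul : Multiset.card σ.cycleType * d = Fintype.card α := by
    rw [← hsum, hsum2]
  have hdvd : d ∣ Fintype.card α := ⟨Multiset.card σ.cycleType, by rw [← hmul, mul_comm]⟩
  refine ⟨?_, hdvd⟩
  have hcard : Multiset.card σ.cycleType = Fintype.card α / d := by
    rw [← hmul, Nat.mul_div_cancel _ (by omega : 0 < d)]
  rw [Multiset.eq_replicate_of_mem hall, hcard]

lemma cycleType_regular {σ : Perm α} {d k : ℕ} (hd : 2 ≤ d)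
    (hk : k * d = Fintype.card α)
    (h : σ.cycleType = Multiset.replicate k d) :
    ∀ x, minimalPeriod (⇑σ) x = d := by
  intro x
  have hsupp : σ.support = Finset.univ := by
    apply Finset.eq_univ_of_card
    rw [← Equiv.Perm.sum_cycleType, h, Multiset.sum_replicate, smul_eq_mul, hk]
  have hσx : σ x ≠ x := by
    rw [← Equiv.Perm.mem_support, hsupp]; exact Finset.mem_univ x
  rw [mp_eq_card_support_cycleOf σ x hσx]
  have : (σ.cycleOf x).support.card ∈ σ.cycleType := by
    rw [Equiv.Perm.cycleType_def, Multiset.mem_map]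
    exact ⟨σ.cycleOf x, Equiv.Perm.cycleOf_mem_cycleFactorsFinset_iff.2
      (Equiv.Perm.mem_support.2 hσx), rfl⟩
  rw [h] at this
  exact Multiset.eq_of_mem_replicate this

variable (m d : ℕ)

/-- model regular permutation on `Fin m × ZMod d` -/
def sigma0 (m d : ℕ) : Perm (Fin m × ZMod d) :=
  (Equiv.refl (Fin m)).prodCongr (Equiv.addRight (1 : ZMod d))

lemma sigma0_iterate (n : ℕ) (x : Fin m × ZMod d) :
    (⇑(sigma0 m d))^[n] x = (x.1, x.2 + n) := by
  induction n with
  | zero => simp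
  | succ n ih =>
    rw [Function.iterate_succ_apply', ih]
    simp [sigma0]
    push_cast
    ring

lemma sigma0_mp [NeZero d] (x : Fin m × ZMod d) :
    minimalPeriod (⇑(sigma0 m d)) x = d := by
  have key : ∀ n : ℕ, IsPeriodicPt (⇑(sigma0 m d)) n x ↔ d ∣ n := by
    intro n
    rw [IsPeriodicPt, IsFixedPt, sigma0_iterate]
    constructor
    · intro h
      have h1 : x.2 + (n : ZMod d) = x.2 + 0 := by
        simpa using congrArg Prod.snd h
      exact (ZMod.natCast_eq_zero_iff n d).1 (add_left_cancel h1)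
    · intro h
      rw [(ZMod.natCast_eq_zero_iff n d).2 h]
      simp
  have hd : 0 < d := Nat.pos_of_ne_zero (NeZero.ne d)
  have h1 : minimalPeriod (⇑(sigma0 m d)) x ∣ d :=
    IsPeriodicPt.minimalPeriod_dvd ((key d).2 dvd_rfl)
  have h2 : d ∣ minimalPeriod (⇑(sigma0 m d)) x :=
    (key _).1 (isPeriodicPt_minimalPeriod _ _)
  exact Nat.dvd_antisymm h1 h2

/-- the family of permutations commuting with sigma0 -/
def phi (pv : Perm (Fin m) × (Fin m → ZMod d)) : Perm (Fin m × ZMod d) :=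
  Equiv.prodShear pv.1 (fun i => Equiv.addRight (pv.2 i))

lemma phi_apply (pv : Perm (Fin m) × (Fin m → ZMod d)) (x : Fin m × ZMod d) :
    phi m d pv x = (pv.1 x.1, x.2 + pv.2 x.1) := rfl

lemma phi_mem (pv : Perm (Fin m) × (Fin m → ZMod d)) :
    phi m d pv ∈ Subgroup.centralizer {sigma0 m d} := by
  rw [Subgroup.mem_centralizer_singleton_iff]
  ext x <;> simp [phi_apply, sigma0, Equiv.Perm.mul_apply] <;> ring

lemma phi_injective : Function.Injective (phi m d) := by
  intro pv pw h
  have h1 : ∀ i : Fin m, phi m d pv (i, 0) = phi m d pw (i, 0) := fun i => by rw [h]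
  simp only [phi_apply, zero_add, Prod.mk.injEq] at h1
  have hp : pv.1 = pw.1 := Equiv.ext fun i => (h1 i).1
  have hv : pv.2 = pw.2 := funext fun i => (h1 i).2
  exact Prod.ext hp hv

lemma centralizer_apply_eq {τ : Perm (Fin m × ZMod d)} [NeZero d]
    (hτ : ∀ y, τ (sigma0 m d y) = sigma0 m d (τ y)) (x : Fin m × ZMod d) :
    τ x = ((τ (x.1, 0)).1, (τ (x.1, 0)).2 + x.2) := by
  have hcomm : ∀ (n : ℕ) (y : Fin m × ZMod d),
      τ ((⇑(sigma0 m d))^[n] y) = (⇑(sigma0 m d))^[n] (τ y) :=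
    fun n y => Function.Commute.iterate_right hτ n y
  have hx : x = (⇑(sigma0 m d))^[x.2.val] (x.1, 0) := by
    rw [sigma0_iterate, ZMod.natCast_rightInverse x.2, zero_add]
  calc τ x = τ ((⇑(sigma0 m d))^[x.2.val] (x.1, 0)) := by rw [← hx]
    _ = (⇑(sigma0 m d))^[x.2.val] (τ (x.1, 0)) := hcomm _ _
    _ = ((τ (x.1, 0)).1, (τ (x.1, 0)).2 + x.2) := by
        rw [sigma0_iterate]
        rw [ZMod.natCast_rightInverse x.2]

lemma phi_surjective [NeZero d] (τ : Perm (Fin m × ZMod d))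
    (hτ : τ ∈ Subgroup.centralizer {sigma0 m d}) :
    ∃ pv, phi m d pv = τ := by
  rw [Subgroup.mem_centralizer_singleton_iff] at hτ
  have hτ' : ∀ y, τ (sigma0 m d y) = sigma0 m d (τ y) := by
    intro y
    have := congrArg (fun σ : Perm (Fin m × ZMod d) => σ y) hτ
    simpa [Equiv.Perm.mul_apply] using this
  have hτinv : ∀ y, τ⁻¹ (sigma0 m d y) = sigma0 m d (τ⁻¹ y) := by
    intro y
    have : τ⁻¹ * sigma0 m d = sigma0 m d * τ⁻¹ := by
      have := congrArg (fun σ => τ⁻¹ * σ * τ⁻¹) hτ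
      simpa [mul_assoc] using this.symm
    have := congrArg (fun σ : Perm (Fin m × ZMod d) => σ y) this
    simpa [Equiv.Perm.mul_apply] using this
  set g : Fin m → Fin m := fun i => (τ (i, 0)).1 with hg
  set g' : Fin m → Fin m := fun i => (τ⁻¹ (i, 0)).1 with hg'
  have hgg' : ∀ i, g' (g i) = i := by
    intro i
    have h1 : τ⁻¹ (τ (i, 0)) = (i, 0) := τ.symm_apply_apply _
    have h2 := centralizer_apply_eq m d hτinv (τ (i, 0))
    rw [h1] at h2
    have := congrArg Prod.fst h2
    simpa [hg, hg'] using this.symm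
  have hg'g : ∀ i, g (g' i) = i := by
    intro i
    have h1 : τ (τ⁻¹ (i, 0)) = (i, 0) := τ.apply_symm_apply _
    have h2 := centralizer_apply_eq m d hτ' (τ⁻¹ (i, 0))
    rw [h1] at h2
    have := congrArg Prod.fst h2
    simpa [hg, hg'] using this.symm
  refine ⟨(⟨g, g', fun i => hgg' i, fun i => hg'g i⟩, fun i => (τ (i, 0)).2), ?_⟩
  apply Equiv.ext
  intro x
  rw [phi_apply, centralizer_apply_eq m d hτ' x]
  show ((τ (x.1, 0)).1, x.2 + (τ (x.1, 0)).2) = _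
  rw [add_comm]

-- lemma B
lemma regular_iff_cycleType {α : Type*} [Fintype α] [DecidableEq α]
    {σ₀ τ : Perm α} {d : ℕ} (hd : 1 ≤ d) (h₀ : ∀ x, minimalPeriod (⇑σ₀) x = d) :
    (∀ x, Function.minimalPeriod (⇑τ) x = d) ↔ τ.cycleType = σ₀.cycleType := by
  rcases eq_or_lt_of_le hd with h1 | h2
  · -- d = 1
    have hσ₀ : σ₀ = 1 := by
      ext x
      have := h₀ x
      rw [← h1, minimalPeriod_eq_one_iff_isFixedPt] at this
      exact this
    subst hσ₀
    rw [Equiv.Perm.cycleType_one, Equiv.Perm.cycleType_eq_zero]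
    constructor
    · intro h
      ext x
      have := h x
      rw [← h1, minimalPeriod_eq_one_iff_isFixedPt] at this
      exact this
    · rintro rfl x
      rw [← h1]
      exact minimalPeriod_id
  · -- 2 ≤ d
    have hd2 : 2 ≤ d := h2
    obtain ⟨hct₀, hdvd⟩ := regular_cycleType hd2 h₀
    constructor
    · intro h
      rw [(regular_cycleType hd2 h).1, hct₀]
    · intro h
      rw [hct₀] at h
      exact cycleType_regular hd2 (Nat.div_mul_cancel hdvd) h

lemma count_regular (m d : ℕ) [NeZero d] :
    Nat.card {τ : Perm (Fin m × ZMod d) // ∀ x, Function.minimalPeriod (⇑τ) x = d}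
      * (d ^ m * Nat.factorial m) = Nat.factorial (m * d) := by
  classical
  set G := Perm (Fin m × ZMod d)
  have hd1 : 1 ≤ d := Nat.one_le_iff_ne_zero.2 (NeZero.ne d)
  -- the set equals the conjugation orbit of sigma0
  have horb : {τ : G | ∀ x, Function.minimalPeriod (⇑τ) x = d}
      = MulAction.orbit (ConjAct G) (sigma0 m d) := by
    ext τ
    rw [Set.mem_setOf_eq, ConjAct.mem_orbit_conjAct, Equiv.Perm.isConj_iff_cycleType_eq,
      regular_iff_cycleType hd1 (sigma0_mp m d)]
  -- centralizer cardinality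
  have hcent : Nat.card (Subgroup.centralizer {sigma0 m d}) = Nat.factorial m * d ^ m := by
    have hbij : Function.Bijective
        (fun pv : Perm (Fin m) × (Fin m → ZMod d) =>
          (⟨phi m d pv, phi_mem m d pv⟩ : Subgroup.centralizer {sigma0 m d})) := by
      constructor
      · intro a b hab
        exact phi_injective m d (congrArg Subtype.val hab)
      · rintro ⟨τ, hτ⟩
        obtain ⟨pv, hpv⟩ := phi_surjective m d τ hτ
        exact ⟨pv, Subtype.ext hpv⟩
    have := Nat.card_congr (Equiv.ofBijective _ hbij)
    rw [← this, Nat.card_prod, Nat.card_eq_fintype_card, Nat.card_eq_fintype_card,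
      Fintype.card_perm, Fintype.card_fin, Fintype.card_fun, ZMod.card, Fintype.card_fin]
  -- stabilizer = centralizer
  have hstab : Nat.card (MulAction.stabilizer (ConjAct G) (sigma0 m d))
      = Nat.card (Subgroup.centralizer ({sigma0 m d} : Set G)) := by
    apply Nat.card_congr
    exact (Equiv.subtypeEquiv (ConjAct.toConjAct : G ≃* ConjAct G).toEquiv (fun k => by
      rw [Subgroup.centralizer_eq_comap_stabilizer]
      rfl)).symm
  -- orbit stabilizer
  letI : Fintype ↥(MulAction.orbit (ConjAct G) (sigma0 m d)) := Fintype.ofFinite _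
  have hos := MulAction.card_orbit_mul_card_stabilizer_eq_card_group (ConjAct G) (sigma0 m d)
  have hcardG : Fintype.card (ConjAct G) = Nat.factorial (m * d) := by
    rw [ConjAct.card, Fintype.card_perm, Fintype.card_prod, Fintype.card_fin, ZMod.card]
  have hset : Nat.card {τ : G // ∀ x, Function.minimalPeriod (⇑τ) x = d}
      = Fintype.card ↥(MulAction.orbit (ConjAct G) (sigma0 m d)) := by
    rw [← Nat.card_eq_fintype_card]
    apply Nat.card_congr
    exact Equiv.subtypeEquiv (Equiv.refl G) (fun τ => by
      rw [← horb]; rfl)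
  rw [hset, hcent] at *
  rw [← hcardG, ← hos, Nat.card_eq_fintype_card] at *
  rw [hstab, hcent]
  ring

lemma mp_permCongr {β α : Type*} (e : β ≃ α) (σ : Perm β) (x : β) :
    Function.minimalPeriod (⇑(e.permCongr σ)) (e x) = Function.minimalPeriod (⇑σ) x := by
  have hsemi : Function.Semiconj ⇑e ⇑σ ⇑(e.permCongr σ) := by
    intro y
    simp [Equiv.permCongr_apply]
  rw [Function.minimalPeriod_eq_minimalPeriod_iff]
  intro n
  have := (hsemi.iterate_right n).eq x
  unfold Function.IsPeriodicPt Function.IsFixedPt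
  constructor
  · intro h
    apply e.injective
    have h2 : (⇑(e.permCongr σ))^[n] (e x) = e ((⇑σ)^[n] x) := ((hsemi.iterate_right n).eq x).symm
    rw [← h2, h]
  · intro h
    have h2 : (⇑(e.permCongr σ))^[n] (e x) = e ((⇑σ)^[n] x) := ((hsemi.iterate_right n).eq x).symm
    rw [h2, h]

lemma mp_pos {α : Type*} [Fintype α] (σ : Perm α) (x : α) :
    0 < Function.minimalPeriod (⇑σ) x := by
  apply Function.IsPeriodicPt.minimalPeriod_pos (orderOf_pos σ)
  show Function.IsFixedPt _ _
  rw [Equiv.Perm.iterate_eq_pow, pow_orderOf_eq_one]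
  rfl

lemma card_regular_fin (ℓ d : ℕ) (hd : d ∣ ℓ) (hd1 : 1 ≤ d) :
    Nat.card {σ : Perm (Fin ℓ) // ∀ x, Function.minimalPeriod (⇑σ) x = d}
      * (d ^ (ℓ / d) * Nat.factorial (ℓ / d)) = Nat.factorial ℓ := by
  haveI : NeZero d := ⟨by omega⟩
  set m := ℓ / d with hm
  have hmd : m * d = ℓ := Nat.div_mul_cancel hd
  have e : Fin ℓ ≃ Fin m × ZMod d := by
    apply Fintype.equivOfCardEq
    rw [Fintype.card_prod, Fintype.card_fin, ZMod.card, Fintype.card_fin, hmd]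
  have hcongr : Nat.card {σ : Perm (Fin ℓ) // ∀ x, Function.minimalPeriod (⇑σ) x = d}
      = Nat.card {τ : Perm (Fin m × ZMod d) // ∀ x, Function.minimalPeriod (⇑τ) x = d} := by
    apply Nat.card_congr
    refine Equiv.subtypeEquiv e.permCongr (fun σ => ?_)
    constructor
    · intro h y
      have := mp_permCongr e σ (e.symm y)
      rw [Equiv.apply_symm_apply] at this
      rw [this, h]
    · intro h x
      rw [← mp_permCongr e σ x, h]
  rw [hcongr, ← hmd, count_regular m d]

lemma total_count (ℓ : ℕ) (hl : 1 ≤ ℓ) :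
    Nat.card {σ : Equiv.Perm (Fin ℓ) //
      ∀ x y, Function.minimalPeriod (⇑σ) x = Function.minimalPeriod (⇑σ) y}
      = ∑ d ∈ ℓ.divisors,
        Nat.card {σ : Perm (Fin ℓ) // ∀ x, Function.minimalPeriod (⇑σ) x = d} := by
  classical
  have x₀ : Fin ℓ := ⟨0, hl⟩
  have hcard : ∀ (p : Perm (Fin ℓ) → Prop) [DecidablePred p],
      Nat.card {σ : Perm (Fin ℓ) // p σ} = (univ.filter p).card := by
    intro p hp
    rw [Nat.card_eq_fintype_card, Fintype.card_subtype]
  rw [hcard]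
  have := Finset.card_eq_sum_card_fiberwise
    (f := fun σ : Perm (Fin ℓ) => Function.minimalPeriod (⇑σ) x₀)
    (s := univ.filter (fun σ : Perm (Fin ℓ) =>
      ∀ x y, Function.minimalPeriod (⇑σ) x = Function.minimalPeriod (⇑σ) y))
    (t := ℓ.divisors) ?hmem
  · rw [this]
    apply Finset.sum_congr rfl
    intro d hd
    rw [hcard]
    congr 1
    ext σ
    simp only [mem_filter, mem_univ, true_and]
    constructor
    · rintro ⟨h1, h2⟩ x
      rw [h1 x x₀, h2]
    · intro h
      exact ⟨fun x y => by rw [h x, h y], h x₀⟩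
  · intro σ hσ
    simp only [Finset.mem_coe, mem_filter, mem_univ, true_and] at hσ
    set d := Function.minimalPeriod (⇑σ) x₀ with hd
    have hall : ∀ x, Function.minimalPeriod (⇑σ) x = d := fun x => hσ x x₀
    have hpos : 0 < d := mp_pos σ x₀
    rw [Finset.mem_coe, Nat.mem_divisors]
    refine ⟨?_, by omega⟩
    show d ∣ ℓ
    rcases Nat.lt_or_ge d 2 with h2 | h2
    · interval_cases d
      · exact one_dvd ℓ
    · have := (regular_cycleType h2 hall).2
      rwa [Fintype.card_fin] at this

lemma sum_bounds (ℓ : ℕ) (hl : 1 ≤ ℓ) :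
    1 / (ℓ : ℝ) ≤ (∑ m ∈ ℓ.divisors, (m : ℝ) ^ m / ((ℓ : ℝ) ^ m * Nat.factorial m)) ∧
    (∑ m ∈ ℓ.divisors, (m : ℝ) ^ m / ((ℓ : ℝ) ^ m * Nat.factorial m))
      ≤ 1 / (ℓ : ℝ) + 2 / (ℓ : ℝ) ^ 2 + (Real.exp 3 / (1 - Real.exp 1 / 3)) / (ℓ : ℝ) ^ 3 := by
  have hℓ0 : (0 : ℝ) < ℓ := by exact_mod_cast hl
  set t : ℕ → ℝ := fun m => (m : ℝ) ^ m / ((ℓ : ℝ) ^ m * Nat.factorial m) with ht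
  have htnn : ∀ m, 0 ≤ t m := by
    intro m
    have : (0:ℝ) < Nat.factorial m := by exact_mod_cast m.factorial_pos
    positivity
  have ht1 : t 1 = 1 / (ℓ : ℝ) := by simp [ht, Nat.factorial]
  have ht2 : t 2 = 2 / (ℓ : ℝ) ^ 2 := by
    simp only [ht, Nat.factorial]
    norm_num
    ring
  constructor
  · rw [← ht1]
    exact Finset.single_le_sum (fun m _ => htnn m)
      (Nat.one_mem_divisors.2 (by omega))
  · -- upper bound
    have hE3 : Real.exp 1 < 3 := by
      have := Real.exp_one_lt_d9
      linarith
    have hE0 : 0 < Real.exp 1 := Real.exp_pos 1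
    set B : ℝ := Real.exp 1 / 3 with hB
    have hB0 : 0 ≤ B := by positivity
    have hB1 : B < 1 := by rw [hB]; linarith
    have h1B : 0 < 1 - B := by linarith
    rw [← Finset.sum_filter_add_sum_filter_not ℓ.divisors (fun m => m ≤ 2) t]
    have hA : ∑ m ∈ ℓ.divisors.filter (fun m => m ≤ 2), t m ≤ 1 / (ℓ:ℝ) + 2 / (ℓ:ℝ)^2 := by
      have hsub : ℓ.divisors.filter (fun m => m ≤ 2) ⊆ ({1, 2} : Finset ℕ) := by
        intro m hm
        simp only [mem_filter, Nat.mem_divisors] at hm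
        have hm1 : 1 ≤ m := Nat.pos_of_dvd_of_pos hm.1.1 (by omega)
        simp only [Finset.mem_insert, Finset.mem_singleton]
        omega
      calc ∑ m ∈ ℓ.divisors.filter (fun m => m ≤ 2), t m
          ≤ ∑ m ∈ ({1, 2} : Finset ℕ), t m :=
            Finset.sum_le_sum_of_subset_of_nonneg hsub (fun m _ _ => htnn m)
        _ = t 1 + t 2 := by rw [Finset.sum_insert (by norm_num), Finset.sum_singleton]
        _ = 1 / (ℓ:ℝ) + 2 / (ℓ:ℝ)^2 := by rw [ht1, ht2]
    have hBsum : ∑ m ∈ ℓ.divisors.filter (fun m => ¬ m ≤ 2), t m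
        ≤ (Real.exp 3 / (1 - Real.exp 1 / 3)) / (ℓ:ℝ) ^ 3 := by
      rcases le_or_gt 3 ℓ with h3 | h3
      · have hℓ3 : (3:ℝ) ≤ (ℓ:ℝ) := by exact_mod_cast h3
        have hterm : ∀ m ∈ ℓ.divisors.filter (fun m => ¬ m ≤ 2),
            t m ≤ (Real.exp 1 / ℓ) ^ 3 * B ^ (m - 3) := by
          intro m hm
          simp only [mem_filter, Nat.mem_divisors] at hm
          have hm3 : 3 ≤ m := by omega
          have hmR : (0:ℝ) ≤ m := by positivity
          have hfm : (0:ℝ) < Nat.factorial m := by exact_mod_cast m.factorial_pos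
          have h1 : (m:ℝ) ^ m / Nat.factorial m ≤ Real.exp 1 ^ m := by
            have := Real.pow_div_factorial_le_exp (x := (m:ℝ)) hmR m
            rwa [show Real.exp (m:ℝ) = Real.exp 1 ^ m by
              rw [← Real.exp_nat_mul, mul_one]] at this
          have h2 : t m ≤ (Real.exp 1 / ℓ) ^ m := by
            rw [ht, div_pow]
            rw [div_le_div_iff₀ (by positivity) (by positivity)]
            calc (m:ℝ) ^ m * (ℓ:ℝ) ^ m
                = ((m:ℝ) ^ m / Nat.factorial m) * Nat.factorial m * (ℓ:ℝ) ^ m := by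
                  field_simp
              _ ≤ Real.exp 1 ^ m * Nat.factorial m * (ℓ:ℝ) ^ m := by
                  have hp : (0:ℝ) ≤ (ℓ:ℝ) ^ m := by positivity
                  nlinarith [mul_le_mul_of_nonneg_right h1 hfm.le]
              _ = Real.exp 1 ^ m * ((ℓ:ℝ) ^ m * Nat.factorial m) := by ring
          refine h2.trans ?_
          have hsplit : (Real.exp 1 / ℓ) ^ m
              = (Real.exp 1 / ℓ) ^ 3 * (Real.exp 1 / ℓ) ^ (m - 3) := by
            rw [← pow_add]
            congr 1
            omega
          rw [hsplit]
          apply mul_le_mul_of_nonneg_left _ (by positivity)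
          apply pow_le_pow_left₀ (by positivity)
          rw [hB]
          apply div_le_div_of_nonneg_left hE0.le (by norm_num) hℓ3
        calc ∑ m ∈ ℓ.divisors.filter (fun m => ¬ m ≤ 2), t m
            ≤ ∑ m ∈ ℓ.divisors.filter (fun m => ¬ m ≤ 2),
                (Real.exp 1 / ℓ) ^ 3 * B ^ (m - 3) := Finset.sum_le_sum hterm
          _ = (Real.exp 1 / ℓ) ^ 3 * ∑ m ∈ ℓ.divisors.filter (fun m => ¬ m ≤ 2), B ^ (m - 3) := by
              rw [Finset.mul_sum]
          _ ≤ (Real.exp 1 / ℓ) ^ 3 * (1 - B)⁻¹ := by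
              apply mul_le_mul_of_nonneg_left _ (by positivity)
              have hsub2 : ℓ.divisors.filter (fun m => ¬ m ≤ 2) ⊆ Finset.Icc 3 ℓ := by
                intro m hm
                simp only [mem_filter, Nat.mem_divisors] at hm
                have := Nat.le_of_dvd (by omega) hm.1.1
                rw [Finset.mem_Icc]
                omega
              calc ∑ m ∈ ℓ.divisors.filter (fun m => ¬ m ≤ 2), B ^ (m - 3)
                  ≤ ∑ m ∈ Finset.Icc 3 ℓ, B ^ (m - 3) :=
                    Finset.sum_le_sum_of_subset_of_nonneg hsub2 (fun m _ _ => by positivity)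
                _ = ∑ i ∈ Finset.range (ℓ + 1 - 3), B ^ i := by
                    rw [← Finset.Ico_add_one_right_eq_Icc, Finset.sum_Ico_eq_sum_range]
                    apply Finset.sum_congr rfl
                    intro i _
                    congr 1
                    omega
                _ ≤ ∑' i : ℕ, B ^ i := by
                    apply Summable.sum_le_tsum _ (fun i _ => by positivity)
                    exact summable_geometric_of_lt_one hB0 hB1
                _ = (1 - B)⁻¹ := tsum_geometric_of_lt_one hB0 hB1
          _ = (Real.exp 3 / (1 - Real.exp 1 / 3)) / (ℓ:ℝ) ^ 3 := by
              rw [div_pow]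
              rw [show Real.exp 3 = Real.exp 1 ^ 3 by
                rw [← Real.exp_nat_mul]; norm_num]
              rw [hB]
              field_simp
      · have hempty : ℓ.divisors.filter (fun m => ¬ m ≤ 2) = ∅ := by
          apply Finset.filter_false_of_mem
          intro m hm
          rw [Nat.mem_divisors] at hm
          have := Nat.le_of_dvd (by omega) hm.1
          omega
        rw [hempty, Finset.sum_empty]
        positivity
    linarith [hA, hBsum]

end RegularAux


/-- The probability that a uniformly random permutation of an `ℓ`-set is regular,
i.e. all its cycles have the same length (equivalently, all points have the same
minimal period). -/
noncomputable def regularProb (ℓ : ℕ) : ℝ :=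
  (Nat.card {σ : Equiv.Perm (Fin ℓ) //
      ∀ x y, Function.minimalPeriod (⇑σ) x = Function.minimalPeriod (⇑σ) y} : ℝ) /
    Nat.factorial ℓ

lemma regularProb_formula (ℓ : ℕ) (hl : 1 ≤ ℓ) :
    regularProb ℓ = ∑ m ∈ ℓ.divisors,
      (m : ℝ) ^ m / ((ℓ : ℝ) ^ m * Nat.factorial m) := by

  have hℓ0 : (0 : ℝ) < ℓ := by exact_mod_cast hl
  have hfac : (0 : ℝ) < (Nat.factorial ℓ : ℝ) := by exact_mod_cast ℓ.factorial_pos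
  unfold regularProb
  rw [total_count ℓ hl, Nat.cast_sum, Finset.sum_div]
  -- per-term: N_d / ℓ! = 1 / (d^(ℓ/d) * (ℓ/d)!)
  have step1 : ∀ d ∈ ℓ.divisors,
      (Nat.card {σ : Perm (Fin ℓ) // ∀ x, Function.minimalPeriod (⇑σ) x = d} : ℝ)
        / (Nat.factorial ℓ : ℝ)
      = 1 / ((d : ℝ) ^ (ℓ / d) * (Nat.factorial (ℓ / d) : ℝ)) := by
    intro d hd
    rw [Nat.mem_divisors] at hd
    have hd1 : 1 ≤ d := Nat.pos_of_dvd_of_pos hd.1 (by omega)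
    have key := card_regular_fin ℓ d hd.1 hd1
    have keyR : (Nat.card {σ : Perm (Fin ℓ) // ∀ x, Function.minimalPeriod (⇑σ) x = d} : ℝ)
        * ((d : ℝ) ^ (ℓ / d) * (Nat.factorial (ℓ / d) : ℝ)) = (Nat.factorial ℓ : ℝ) := by
      exact_mod_cast congrArg (Nat.cast : ℕ → ℝ) key
    rw [Nat.card_eq_fintype_card] at keyR
    have hpos : (0 : ℝ) < (d : ℝ) ^ (ℓ / d) * (Nat.factorial (ℓ / d) : ℝ) := by
      positivity
    field_simp
    rw [Nat.card_eq_fintype_card]; linarith [keyR]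
  rw [Finset.sum_congr rfl step1]
  -- reindex d ↦ ℓ / d
  have step2 : ∀ d ∈ ℓ.divisors,
      (1 : ℝ) / ((d : ℝ) ^ (ℓ / d) * (Nat.factorial (ℓ / d) : ℝ))
      = (fun m : ℕ => (1 : ℝ) / (((ℓ / m : ℕ) : ℝ) ^ m * (Nat.factorial m : ℝ))) (ℓ / d) := by
    intro d hd
    rw [Nat.mem_divisors] at hd
    simp only
    rw [Nat.div_div_self hd.1 hd.2]
  rw [Finset.sum_congr rfl step2, Nat.sum_div_divisors ℓ
    (fun m : ℕ => (1 : ℝ) / (((ℓ / m : ℕ) : ℝ) ^ m * (Nat.factorial m : ℝ)))]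
  apply Finset.sum_congr rfl
  intro m hm
  rw [Nat.mem_divisors] at hm
  have hm1 : 1 ≤ m := Nat.pos_of_dvd_of_pos hm.1 (by omega)
  have hcast : ((ℓ / m : ℕ) : ℝ) = (ℓ : ℝ) / (m : ℝ) := by
    rw [Nat.cast_div hm.1 (by exact_mod_cast (by omega : m ≠ 0) : (m:ℝ) ≠ 0)]
  rw [hcast, div_pow]
  have hm0 : (0 : ℝ) < m := by exact_mod_cast hm1
  have hfm : (0 : ℝ) < (Nat.factorial m : ℝ) := by exact_mod_cast m.factorial_pos
  field_simp

theorem regularProb_bounds (ℓ : ℕ) (hl : 1 ≤ ℓ) :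
    (1 / (ℓ : ℝ) ≤ regularProb ℓ ∧
      regularProb ℓ ≤ 1 / (ℓ : ℝ) + 2 / (ℓ : ℝ) ^ 2 +
        (Real.exp 3 / (1 - Real.exp 1 / 3)) / (ℓ : ℝ) ^ 3) ∧
      regularProb ℓ = ∑ m ∈ ℓ.divisors,
        (m : ℝ) ^ m / ((ℓ : ℝ) ^ m * Nat.factorial m) := by
  have hform := regularProb_formula ℓ hl
  have hbd := sum_bounds ℓ hl
  refine ⟨⟨?_, ?_⟩, hform⟩
  · rw [hform]; exact hbd.1
  · rw [hform]; exact hbd.2
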